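/- arXiv:cond-mat/0303518 — 6 statements merged into one kernel-verified Lean document; each statement's English description precedes it below -/
import Mathlib

section
/- Fix β > 0 and a sequence ε : ℕ → ℝ such that the family (exp(−β·εₘ))ₘ is summable, and let F(μ) = ∑ₘ (1 + exp(β(εₘ − μ)))⁻¹. Then F(μ) → 0 as μ → −∞, F(μ) → +∞ as μ → +∞, and consequently for every real N > 0 there exists a unique μ ∈ ℝ with F(μ) = N. -/
open Real Filter

/-- For `β > 0` and energies `ε : ℕ → ℝ` with `∑ₘ exp (-β * ε m) < ∞`, the
particle-number function `F μ = ∑ₘ (1 + exp (β * (ε m - μ)))⁻¹` tends to `0` as `μ → -∞`,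
tends to `+∞` as `μ → +∞`, and for every `N > 0` there is a unique `μ` with `F μ = N`. -/
theorem fermi_dirac_chemical_potential_exists_unique
    (β : ℝ) (hβ : 0 < β) (ε : ℕ → ℝ)
    (hsum : Summable fun m => Real.exp (-β * ε m))
    (F : ℝ → ℝ) (hF : F = fun μ => ∑' m, (1 + Real.exp (β * (ε m - μ)))⁻¹) :
    Tendsto F atBot (nhds 0) ∧
    Tendsto F atTop atTop ∧
    ∀ N : ℝ, 0 < N → ∃! μ : ℝ, F μ = N := by
  set g : ℝ → ℕ → ℝ := fun μ m => (1 + Real.exp (β * (ε m - μ)))⁻¹ with hg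
  have hpos : ∀ μ m, (0:ℝ) < 1 + Real.exp (β * (ε m - μ)) := fun μ m => by positivity
  have hgpos : ∀ μ m, 0 < g μ m := fun μ m => inv_pos.2 (hpos μ m)
  have hgen : ∀ μ m, g μ m ≤ Real.exp (β * μ) * Real.exp (-β * ε m) := by
    intro μ m
    have h1 : g μ m ≤ (Real.exp (β * (ε m - μ)))⁻¹ := by
      apply inv_anti₀ (exp_pos _)
      linarith
    calc g μ m ≤ (Real.exp (β * (ε m - μ)))⁻¹ := h1
      _ = Real.exp (β * μ) * Real.exp (-β * ε m) := by
          rw [← Real.exp_neg, ← Real.exp_add]; ring_nf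
  have hsummul : ∀ μ, Summable fun m => Real.exp (β * μ) * Real.exp (-β * ε m) :=
    fun μ => hsum.mul_left _
  have hgsum : ∀ μ, Summable (g μ) := fun μ =>
    Summable.of_nonneg_of_le (fun m => (hgpos μ m).le) (hgen μ) (hsummul μ)
  -- tendsto atBot
  have hbot : Tendsto F atBot (nhds 0) := by
    have hb : Tendsto (fun μ => Real.exp (β * μ) * ∑' m, Real.exp (-β * ε m)) atBot (nhds 0) := by
      have h1 : Tendsto (fun μ : ℝ => β * μ) atBot atBot :=
        Tendsto.const_mul_atBot hβ tendsto_id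
      have := (Real.tendsto_exp_atBot.comp h1).mul_const (∑' m, Real.exp (-β * ε m))
      simpa using this
    apply squeeze_zero (fun μ => ?_) (fun μ => ?_) hb
    · rw [hF]; exact tsum_nonneg fun m => (hgpos μ m).le
    · rw [hF]
      calc (∑' m, g μ m) ≤ ∑' m, Real.exp (β * μ) * Real.exp (-β * ε m) :=
          Summable.tsum_le_tsum (hgen μ) (hgsum μ) (hsummul μ)
        _ = Real.exp (β * μ) * ∑' m, Real.exp (-β * ε m) := tsum_mul_left
  -- tendsto atTop
  have htop : Tendsto F atTop atTop := by
    rw [tendsto_atTop]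
    intro b
    obtain ⟨n, hn⟩ := exists_nat_gt b
    have hterm : ∀ m : ℕ, Tendsto (fun μ => g μ m) atTop (nhds 1) := by
      intro m
      have h1 : Tendsto (fun μ : ℝ => β * (ε m - μ)) atTop atBot := by
        apply Tendsto.const_mul_atBot hβ
        exact tendsto_atBot_add_const_left _ _ (tendsto_neg_atTop_atBot.comp tendsto_id)
      have h2 : Tendsto (fun μ => Real.exp (β * (ε m - μ))) atTop (nhds 0) :=
        Real.tendsto_exp_atBot.comp h1
      have h3 : Tendsto (fun μ => 1 + Real.exp (β * (ε m - μ))) atTop (nhds 1) := by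
        simpa using h2.const_add 1
      simpa using h3.inv₀ (by norm_num)
    have hsumn : Tendsto (fun μ => ∑ m ∈ Finset.range n, g μ m) atTop (nhds n) := by
      have := tendsto_finset_sum (Finset.range n) (fun m _ => hterm m)
      simpa using this
    have hev : ∀ᶠ μ in atTop, b ≤ ∑ m ∈ Finset.range n, g μ m :=
      (hsumn.eventually (eventually_gt_nhds hn)).mono fun μ h => h.le
    filter_upwards [hev] with μ hμ
    rw [hF]
    exact hμ.trans (Summable.sum_le_tsum (Finset.range n) (fun m _ => (hgpos μ m).le) (hgsum μ))
  -- strict mono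
  have hmono : StrictMono F := by
    intro μ ν h
    rw [hF]
    refine Summable.tsum_lt_tsum (i := 0) (fun m => ?_) ?_ (hgsum μ) (hgsum ν)
    · apply inv_anti₀ (hpos ν m)
      have : β * (ε m - ν) ≤ β * (ε m - μ) := by nlinarith
      linarith [Real.exp_le_exp.2 this]
    · apply inv_strictAnti₀ (hpos ν 0)
      have : β * (ε 0 - ν) < β * (ε 0 - μ) := by nlinarith
      linarith [Real.exp_lt_exp.2 this]
  -- continuity
  have hcont : Continuous F := by
    rw [continuous_iff_continuousAt]
    intro μ₀
    apply ContinuousOn.continuousAt _ (Iio_mem_nhds (show μ₀ < μ₀ + 1 by linarith))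
    have hU : TendstoUniformlyOn (fun (t : Finset ℕ) x => ∑ m ∈ t, g x m)
        (fun x => ∑' m, g x m) atTop (Set.Iio (μ₀ + 1)) := by
      apply tendstoUniformlyOn_tsum (hsum.mul_left (Real.exp (β * (μ₀ + 1))))
      intro m x hx
      rw [Real.norm_eq_abs, abs_of_nonneg (hgpos x m).le]
      refine (hgen x m).trans ?_
      have : Real.exp (β * x) ≤ Real.exp (β * (μ₀ + 1)) :=
        Real.exp_le_exp.2 (by nlinarith [Set.mem_Iio.1 hx])
      exact mul_le_mul_of_nonneg_right this (exp_pos _).le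
    have hFeq : Set.EqOn F (fun x => ∑' m, g x m) (Set.Iio (μ₀ + 1)) := by
      intro x _; rw [hF]
    refine ContinuousOn.congr ?_ hFeq
    apply hU.continuousOn
    refine Filter.Frequently.of_forall fun t => ?_
    apply continuousOn_finset_sum
    intro m _
    apply Continuous.continuousOn
    apply Continuous.inv₀
    · continuity
    · intro x; positivity
  refine ⟨hbot, htop, fun N hN => ?_⟩
  obtain ⟨a, ha⟩ := (hbot.eventually (eventually_lt_nhds hN)).exists
  obtain ⟨b, hb⟩ := (htop.eventually_gt_atTop N).exists
  have hab : a < b := by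
    by_contra h
    push_neg at h
    exact absurd (hmono.monotone h) (by linarith)
  obtain ⟨μ, _, hμ⟩ := intermediate_value_Icc hab.le hcont.continuousOn
    (Set.mem_Icc.2 ⟨ha.le, hb.le⟩)
  exact ⟨μ, hμ, fun ν hν => hmono.injective (hν.trans hμ.symm)⟩
end

section
/- Let 𝓗 be a complex Hilbert space, let H₀ and V be bounded self-adjoint operators on 𝓗, let a ∈ ℝ be such that A = H₀ + a·Id is a positive invertible operator, and suppose ‖V ∘ A⁻¹‖ ≤ γ for some γ ≥ 0. Let λ ≥ 0, and let η be a unit vector with H₀ η = ε·η for some ε ∈ ℝ. Then Re⟨η, (H₀ + λV) η⟩ ≤ (1 + λγ)·ε + λ·a·γ. -/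
open ContinuousLinearMap

/-- If `H₀`, `V` are bounded self-adjoint operators on a complex Hilbert
space, `A = H₀ + a • 1` is positive and invertible (with inverse `Ainv`), `‖V ∘ A⁻¹‖ ≤ γ`,
`λ ≥ 0`, and `η` is a unit eigenvector of `H₀` with eigenvalue `ε`, then
`Re ⟪η, (H₀ + λ V) η⟫ ≤ (1 + λγ) ε + λ a γ`. -/
theorem eigenvector_quadratic_form_bound_unperturbed
    {𝓗 : Type*} [NormedAddCommGroup 𝓗] [InnerProductSpace ℂ 𝓗] [CompleteSpace 𝓗]
    (H₀ V : 𝓗 →L[ℂ] 𝓗) (hH₀ : IsSelfAdjoint H₀) (hV : IsSelfAdjoint V)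
    (a : ℝ)
    (hpos : ∀ ψ : 𝓗, 0 ≤ (inner ℂ ψ ((H₀ + (a : ℂ) • (1 : 𝓗 →L[ℂ] 𝓗)) ψ) : ℂ).re)
    (Ainv : 𝓗 →L[ℂ] 𝓗)
    (hinv₁ : (H₀ + (a : ℂ) • (1 : 𝓗 →L[ℂ] 𝓗)) ∘L Ainv = 1)
    (hinv₂ : Ainv ∘L (H₀ + (a : ℂ) • (1 : 𝓗 →L[ℂ] 𝓗)) = 1)
    (γ : ℝ) (hγ : 0 ≤ γ) (hVA : ‖V ∘L Ainv‖ ≤ γ)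
    (lam : ℝ) (hlam : 0 ≤ lam)
    (η : 𝓗) (hη : ‖η‖ = 1) (ε : ℝ) (heig : H₀ η = (ε : ℂ) • η) :
    (inner ℂ η ((H₀ + (lam : ℂ) • V) η) : ℂ).re ≤ (1 + lam * γ) * ε + lam * a * γ := by
  have hip : (inner ℂ η η : ℂ) = 1 := by
    rw [inner_self_eq_norm_sq_to_K, hη]; norm_num
  have hAη : (H₀ + (a : ℂ) • (1 : 𝓗 →L[ℂ] 𝓗)) η = ((ε + a : ℝ) : ℂ) • η := by
    simp [heig, add_smul]
  -- ε + a ≥ 0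
  have hεa : 0 ≤ ε + a := by
    have := hpos η
    rw [hAη, inner_smul_right, hip, mul_one] at this
    simpa using this
  -- η = (ε+a) • Ainv η
  have hηA : η = ((ε + a : ℝ) : ℂ) • Ainv η := by
    have h := congrArg (fun T : 𝓗 →L[ℂ] 𝓗 => T η) hinv₂
    simp only [comp_apply, one_apply] at h
    rw [hAη, map_smul] at h
    exact h.symm
  have hVη : V η = ((ε + a : ℝ) : ℂ) • (V ∘L Ainv) η := by
    conv_lhs => rw [hηA]
    simp
  have hb : (inner ℂ η ((V ∘L Ainv) η) : ℂ).re ≤ γ := by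
    calc (inner ℂ η ((V ∘L Ainv) η) : ℂ).re ≤ ‖(inner ℂ η ((V ∘L Ainv) η) : ℂ)‖ :=
          Complex.re_le_norm _
      _ ≤ ‖η‖ * ‖(V ∘L Ainv) η‖ := norm_inner_le_norm _ _
      _ ≤ ‖η‖ * (‖V ∘L Ainv‖ * ‖η‖) := by
          gcongr; exact le_opNorm _ _
      _ = ‖V ∘L Ainv‖ := by rw [hη]; ring
      _ ≤ γ := hVA
  have hmain : (inner ℂ η ((H₀ + (lam : ℂ) • V) η) : ℂ).re
      = ε + lam * ((ε + a) * (inner ℂ η ((V ∘L Ainv) η) : ℂ).re) := by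
    rw [add_apply, smul_apply, inner_add_right, inner_smul_right, heig,
      inner_smul_right, hip, mul_one, hVη, inner_smul_right]
    simp [Complex.mul_re]
  rw [hmain]
  have : lam * ((ε + a) * (inner ℂ η ((V ∘L Ainv) η) : ℂ).re)
      ≤ lam * ((ε + a) * γ) := by
    gcongr
  nlinarith
end

section
/- Let 𝓗 be a complex Hilbert space, let H₀ and V be bounded self-adjoint operators on 𝓗, let a ∈ ℝ be such that A = H₀ + a·Id is a positive invertible operator, and suppose ‖V ∘ A⁻¹‖ ≤ γ with λγ < 1 for some λ ≥ 0, γ ≥ 0. Let η be a unit vector with (H₀ + λV) η = ε·η for some ε ∈ ℝ satisfying ε + a ≥ 0. Then ⟨η, (H₀ + a·Id) η⟩ ≤ (ε + a)/(1 − λγ). -/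
open ContinuousLinearMap

/-- If `H₀`, `V` are bounded self-adjoint operators on a complex Hilbert
space, `A = H₀ + a • 1` is positive and invertible (with inverse `Ainv`), `‖V ∘ A⁻¹‖ ≤ γ`
with `λγ < 1`, and `η` is a unit eigenvector of `H₀ + λ V` with eigenvalue `ε` satisfying
`ε + a ≥ 0`, then `⟪η, (H₀ + a • 1) η⟫ ≤ (ε + a) / (1 - λγ)`. -/
theorem eigenvector_quadratic_form_bound_perturbed
    {𝓗 : Type*} [NormedAddCommGroup 𝓗] [InnerProductSpace ℂ 𝓗] [CompleteSpace 𝓗]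
    (H₀ V : 𝓗 →L[ℂ] 𝓗) (hH₀ : IsSelfAdjoint H₀) (hV : IsSelfAdjoint V)
    (a : ℝ)
    (hpos : ∀ ψ : 𝓗, 0 ≤ (inner ℂ ψ ((H₀ + (a : ℂ) • (1 : 𝓗 →L[ℂ] 𝓗)) ψ) : ℂ).re)
    (Ainv : 𝓗 →L[ℂ] 𝓗)
    (hinv₁ : (H₀ + (a : ℂ) • (1 : 𝓗 →L[ℂ] 𝓗)) ∘L Ainv = 1)
    (hinv₂ : Ainv ∘L (H₀ + (a : ℂ) • (1 : 𝓗 →L[ℂ] 𝓗)) = 1)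
    (γ : ℝ) (hγ : 0 ≤ γ) (hVA : ‖V ∘L Ainv‖ ≤ γ)
    (lam : ℝ) (hlam : 0 ≤ lam) (hlamγ : lam * γ < 1)
    (η : 𝓗) (hη : ‖η‖ = 1) (ε : ℝ)
    (heig : (H₀ + (lam : ℂ) • V) η = (ε : ℂ) • η) (hεa : 0 ≤ ε + a) :
    (inner ℂ η ((H₀ + (a : ℂ) • (1 : 𝓗 →L[ℂ] 𝓗)) η) : ℂ).re ≤ (ε + a) / (1 - lam * γ) := by
  set A : 𝓗 →L[ℂ] 𝓗 := H₀ + (a : ℂ) • (1 : 𝓗 →L[ℂ] 𝓗) with hA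
  set x : 𝓗 := A η with hx
  -- Ainv (A η) = η
  have hAinvA : Ainv x = η := by
    have := congrArg (fun T : 𝓗 →L[ℂ] 𝓗 => T η) hinv₂
    simpa using this
  have hVη : V η = (V ∘L Ainv) x := by
    rw [comp_apply, hAinvA]
  -- A η = (ε+a) • η - lam • V η
  have hAη : x = ((ε : ℂ) + a) • η - (lam : ℂ) • V η := by
    have h1 : H₀ η + (lam : ℂ) • V η = (ε : ℂ) • η := by
      simpa using heig
    have : x = H₀ η + (a : ℂ) • η := by simp [hx, hA]
    rw [this]
    have h2 : H₀ η = (ε : ℂ) • η - (lam : ℂ) • V η := by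
      rw [← h1]; abel
    rw [h2]
    rw [add_smul]
    abel
  have hVηnorm : ‖V η‖ ≤ γ * ‖x‖ := by
    rw [hVη]
    calc ‖(V ∘L Ainv) x‖ ≤ ‖V ∘L Ainv‖ * ‖x‖ := (V ∘L Ainv).le_opNorm x
      _ ≤ γ * ‖x‖ := by
        apply mul_le_mul_of_nonneg_right hVA (norm_nonneg x)
  have hxnorm : ‖x‖ ≤ (ε + a) + lam * (γ * ‖x‖) := by
    calc ‖x‖ = ‖((ε : ℂ) + a) • η - (lam : ℂ) • V η‖ := by rw [← hAη]
      _ ≤ ‖((ε : ℂ) + a) • η‖ + ‖(lam : ℂ) • V η‖ := norm_sub_le _ _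
      _ = ‖((ε : ℂ) + a)‖ * ‖η‖ + ‖(lam : ℂ)‖ * ‖V η‖ := by rw [norm_smul, norm_smul]
      _ ≤ (ε + a) + lam * (γ * ‖x‖) := by
        have h1 : ‖((ε : ℂ) + a)‖ = ε + a := by
          rw [show ((ε : ℂ) + a) = ((ε + a : ℝ) : ℂ) by push_cast; ring]
          rw [Complex.norm_real, Real.norm_eq_abs, abs_of_nonneg hεa]
        have h2 : ‖((lam : ℝ) : ℂ)‖ = lam := by
          rw [Complex.norm_real, Real.norm_eq_abs, abs_of_nonneg hlam]
        rw [h1, h2, hη, mul_one]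
        exact add_le_add (le_refl _) (mul_le_mul_of_nonneg_left hVηnorm hlam)
  have h1γ : 0 < 1 - lam * γ := by linarith
  have hxbound : ‖x‖ ≤ (ε + a) / (1 - lam * γ) := by
    rw [le_div_iff₀ h1γ]
    nlinarith [norm_nonneg x]
  have hre : (inner ℂ η (A η) : ℂ).re ≤ ‖η‖ * ‖x‖ := by
    calc (inner ℂ η (A η) : ℂ).re ≤ ‖(inner ℂ η (A η) : ℂ)‖ := Complex.re_le_norm _
      _ ≤ ‖η‖ * ‖A η‖ := norm_inner_le_norm η (A η)
      _ = ‖η‖ * ‖x‖ := by rw [hx]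
  calc (inner ℂ η (A η) : ℂ).re ≤ ‖η‖ * ‖x‖ := hre
    _ = ‖x‖ := by rw [hη, one_mul]
    _ ≤ (ε + a) / (1 - lam * γ) := hxbound
end

section
/- Let (X, μ) be a measure space, p ≥ 1, and let f : ℝ → ℝ be differentiable on (0, ∞) with t^{1−1/p} |f′(t)| ≤ M for all t > 0. Let n₁, n₂ : X → ℝ be integrable functions with values in (0, ∞) almost everywhere. Then ‖f ∘ n₁ − f ∘ n₂‖_{L^p(μ)} ≤ p · M · ‖n₁ − n₂‖_{L¹(μ)}^{1/p}. -/
open MeasureTheory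
open scoped ENNReal NNReal

lemma abs_rpow_sub_rpow_le {a b z : ℝ} (ha : 0 ≤ a) (hb : 0 ≤ b) (hz0 : 0 ≤ z) (hz1 : z ≤ 1) :
    |a ^ z - b ^ z| ≤ |a - b| ^ z := by
  wlog hab : b ≤ a generalizing a b
  · rw [abs_sub_comm, abs_sub_comm a b]; exact this hb ha (le_of_not_ge hab)
  have key : a ^ z ≤ (a - b) ^ z + b ^ z := by
    have h := NNReal.rpow_add_le_add_rpow ((a - b).toNNReal) (b.toNNReal) hz0 hz1
    have h' := NNReal.coe_le_coe.2 h
    push_cast at h'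
    rw [Real.coe_toNNReal _ (sub_nonneg.2 hab), Real.coe_toNNReal _ hb, sub_add_cancel] at h'
    exact h'
  have hmono : b ^ z ≤ a ^ z := Real.rpow_le_rpow hb hab hz0
  rw [abs_of_nonneg (sub_nonneg.2 hmono), abs_of_nonneg (sub_nonneg.2 hab)]
  linarith

lemma pointwise_xc_bound (p : ℝ) (hp : 1 ≤ p) (f f' : ℝ → ℝ)
    (hf : ∀ t ∈ Set.Ioi (0 : ℝ), HasDerivAt f (f' t) t) (M : ℝ) (hM : 0 ≤ M)
    (hbound : ∀ t : ℝ, 0 < t → t ^ (1 - 1 / p) * |f' t| ≤ M)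
    {a b : ℝ} (ha : 0 < a) (hb : 0 < b) :
    |f a - f b| ≤ p * M * |a - b| ^ (1 / p) := by
  have hp0 : (0:ℝ) < p := lt_of_lt_of_le one_pos hp
  set g : ℝ → ℝ := fun s => f (s ^ p) with hgdef
  set g' : ℝ → ℝ := fun s => f' (s ^ p) * (p * s ^ (p - 1)) with hg'def
  have hg : ∀ s ∈ Set.Ioi (0:ℝ), HasDerivWithinAt g (g' s) (Set.Ioi 0) s := by
    intro s hs
    have hs0 : (0:ℝ) < s := hs
    have h1 : HasDerivAt (fun s : ℝ => s ^ p) (p * s ^ (p - 1)) s :=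
      Real.hasDerivAt_rpow_const (Or.inl hs0.ne')
    exact ((hf (s ^ p) (Real.rpow_pos_of_pos hs0 p)).comp s h1).hasDerivWithinAt
  have hC : ∀ s ∈ Set.Ioi (0:ℝ), ‖g' s‖ ≤ p * M := by
    intro s hs
    have hs0 : (0:ℝ) < s := hs
    have ht : (0:ℝ) < s ^ p := Real.rpow_pos_of_pos hs0 p
    have key : (s ^ p) ^ (1 - 1/p) = s ^ (p - 1) := by
      rw [← Real.rpow_mul hs0.le]
      congr 1
      field_simp
    have hb' := hbound (s ^ p) ht
    rw [key] at hb'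
    have hsp : (0:ℝ) < s ^ (p - 1) := Real.rpow_pos_of_pos hs0 _
    have : ‖g' s‖ = p * (s ^ (p - 1) * |f' (s ^ p)|) := by
      rw [hg'def]
      simp only [Real.norm_eq_abs, abs_mul, abs_of_pos hp0, abs_of_pos hsp]
      ring
    rw [this]
    have : s ^ (p - 1) * |f' (s ^ p)| ≤ M := hb'
    nlinarith
  have conv : Convex ℝ (Set.Ioi (0:ℝ)) := convex_Ioi 0
  have hA : a ^ (1/p) ∈ Set.Ioi (0:ℝ) := Real.rpow_pos_of_pos ha _
  have hB : b ^ (1/p) ∈ Set.Ioi (0:ℝ) := Real.rpow_pos_of_pos hb _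
  have hmvt := conv.norm_image_sub_le_of_norm_hasDerivWithin_le hg hC hB hA
  have ga : g (a ^ (1/p)) = f a := by
    rw [hgdef]
    simp only
    rw [← Real.rpow_mul ha.le, one_div_mul_cancel hp0.ne', Real.rpow_one]
  have gb : g (b ^ (1/p)) = f b := by
    rw [hgdef]
    simp only
    rw [← Real.rpow_mul hb.le, one_div_mul_cancel hp0.ne', Real.rpow_one]
  rw [ga, gb, Real.norm_eq_abs, Real.norm_eq_abs] at hmvt
  refine hmvt.trans ?_
  have h2 : |a ^ (1/p) - b ^ (1/p)| ≤ |a - b| ^ (1/p) :=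
    abs_rpow_sub_rpow_le ha.le hb.le (by positivity) (by rw [div_le_one hp0]; exact hp)
  have hpM : 0 ≤ p * M := by positivity
  calc p * M * |a ^ (1/p) - b ^ (1/p)| ≤ p * M * |a - b| ^ (1/p) := by
        exact mul_le_mul_of_nonneg_left h2 hpM
    _ = p * M * |a - b| ^ (1/p) := rfl

/-- If `p ≥ 1`, `f` is differentiable on `(0, ∞)` with
`t^(1 - 1/p) · |f' t| ≤ M`, and `n₁, n₂` are integrable with values a.e. in `(0, ∞)`,
then `‖f ∘ n₁ - f ∘ n₂‖_{L^p(μ)} ≤ p · M · ‖n₁ - n₂‖_{L¹(μ)}^(1/p)`. -/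
theorem xc_potential_Lp_difference_bound
    {X : Type*} [MeasurableSpace X] (μ : Measure X)
    (p : ℝ) (hp : 1 ≤ p) (f f' : ℝ → ℝ)
    (hf : ∀ t ∈ Set.Ioi (0 : ℝ), HasDerivAt f (f' t) t)
    (M : ℝ) (hM : 0 ≤ M)
    (hbound : ∀ t : ℝ, 0 < t → t ^ (1 - 1 / p) * |f' t| ≤ M)
    (n₁ n₂ : X → ℝ) (h₁ : Integrable n₁ μ) (h₂ : Integrable n₂ μ)
    (h₁pos : ∀ᵐ x ∂μ, 0 < n₁ x) (h₂pos : ∀ᵐ x ∂μ, 0 < n₂ x) :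
    eLpNorm (fun x => f (n₁ x) - f (n₂ x)) (ENNReal.ofReal p) μ ≤
      ENNReal.ofReal (p * M * (∫ x, |n₁ x - n₂ x| ∂μ) ^ (1 / p)) := by
  have hp0 : (0:ℝ) < p := lt_of_lt_of_le one_pos hp
  have hq0 : ENNReal.ofReal p ≠ 0 := by simp [hp0]
  have hqt : ENNReal.ofReal p ≠ ∞ := ENNReal.ofReal_ne_top
  rw [eLpNorm_eq_lintegral_rpow_enorm_toReal hq0 hqt, ENNReal.toReal_ofReal hp0.le]
  -- pointwise a.e. bound
  have hae : ∀ᵐ x ∂μ, (‖f (n₁ x) - f (n₂ x)‖₊ : ℝ≥0∞) ^ p ≤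
      ENNReal.ofReal ((p * M) ^ p) * ‖n₁ x - n₂ x‖₊ := by
    filter_upwards [h₁pos, h₂pos] with x ha hb
    have hpt := pointwise_xc_bound p hp f f' hf M hM hbound ha hb
    have hpM : 0 ≤ p * M := by positivity
    have hreal : |f (n₁ x) - f (n₂ x)| ^ p ≤ (p * M) ^ p * |n₁ x - n₂ x| := by
      calc |f (n₁ x) - f (n₂ x)| ^ p ≤ (p * M * |n₁ x - n₂ x| ^ (1/p)) ^ p :=
            Real.rpow_le_rpow (abs_nonneg _) hpt hp0.le
        _ = (p * M) ^ p * (|n₁ x - n₂ x| ^ (1/p)) ^ p := by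
            rw [Real.mul_rpow hpM (by positivity)]
        _ = (p * M) ^ p * |n₁ x - n₂ x| := by
            rw [← Real.rpow_mul (abs_nonneg _), one_div_mul_cancel hp0.ne', Real.rpow_one]
    calc (‖f (n₁ x) - f (n₂ x)‖₊ : ℝ≥0∞) ^ p
        = ENNReal.ofReal (|f (n₁ x) - f (n₂ x)| ^ p) := by
          rw [← Real.norm_eq_abs, ← enorm_eq_nnnorm, ← ofReal_norm,
            ← ENNReal.ofReal_rpow_of_nonneg (norm_nonneg _) hp0.le]
      _ ≤ ENNReal.ofReal ((p * M) ^ p * |n₁ x - n₂ x|) := ENNReal.ofReal_le_ofReal hreal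
      _ = ENNReal.ofReal ((p * M) ^ p) * ENNReal.ofReal |n₁ x - n₂ x| := by
          rw [ENNReal.ofReal_mul (by positivity)]
      _ = ENNReal.ofReal ((p * M) ^ p) * ‖n₁ x - n₂ x‖₊ := by
          rw [← Real.norm_eq_abs, ofReal_norm, enorm_eq_nnnorm]
  have hint : ∫⁻ x, (‖f (n₁ x) - f (n₂ x)‖₊ : ℝ≥0∞) ^ p ∂μ ≤
      ENNReal.ofReal ((p * M) ^ p) * ∫⁻ x, (‖n₁ x - n₂ x‖₊ : ℝ≥0∞) ∂μ := by
    calc ∫⁻ x, (‖f (n₁ x) - f (n₂ x)‖₊ : ℝ≥0∞) ^ p ∂μ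
        ≤ ∫⁻ x, ENNReal.ofReal ((p * M) ^ p) * ‖n₁ x - n₂ x‖₊ ∂μ := lintegral_mono_ae hae
      _ = ENNReal.ofReal ((p * M) ^ p) * ∫⁻ x, (‖n₁ x - n₂ x‖₊ : ℝ≥0∞) ∂μ :=
          lintegral_const_mul' _ _ ENNReal.ofReal_ne_top
  have hsub : Integrable (fun x => n₁ x - n₂ x) μ := h₁.sub h₂
  have hL1 : ∫⁻ x, (‖n₁ x - n₂ x‖₊ : ℝ≥0∞) ∂μ = ENNReal.ofReal (∫ x, |n₁ x - n₂ x| ∂μ) := by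
    simp_rw [← enorm_eq_nnnorm, ← ofReal_integral_norm_eq_lintegral_enorm hsub]
    simp [Real.norm_eq_abs]
  rw [hL1] at hint
  have hI : 0 ≤ ∫ x, |n₁ x - n₂ x| ∂μ := integral_nonneg fun x => abs_nonneg _
  calc (∫⁻ x, (‖f (n₁ x) - f (n₂ x)‖₊ : ℝ≥0∞) ^ p ∂μ) ^ (1/p)
      ≤ (ENNReal.ofReal ((p * M) ^ p) * ENNReal.ofReal (∫ x, |n₁ x - n₂ x| ∂μ)) ^ (1/p) :=
        ENNReal.rpow_le_rpow hint (by positivity)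
    _ = ENNReal.ofReal (p * M * (∫ x, |n₁ x - n₂ x| ∂μ) ^ (1/p)) := by
        rw [ENNReal.mul_rpow_of_nonneg _ _ (by positivity : (0:ℝ) ≤ 1/p),
          ← ENNReal.ofReal_rpow_of_nonneg (by positivity) (by positivity),
          ← ENNReal.rpow_mul, mul_one_div_cancel hp0.ne', ENNReal.rpow_one,
          ENNReal.ofReal_rpow_of_nonneg hI (by positivity),
          ← ENNReal.ofReal_mul (by positivity)]
end

section
/- Let (X, μ) be a finite measure space, p ≥ 1, and let f : ℝ → ℝ be differentiable on (0, ∞) with t^{1−1/p} |f′(t)| ≤ M for all t > 0. Let n₁, n₂ : X → ℝ be integrable functions with values in (0, ∞) almost everywhere. Then ‖f ∘ n₁ − f ∘ n₂‖_{L¹(μ)} ≤ p · μ(X)^{1−1/p} · M · ‖n₁ − n₂‖_{L¹(μ)}^{1/p}. -/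
open MeasureTheory

/-- For `0 ≤ a ≤ b` and `0 ≤ c ≤ 1`, we have `b ^ c - a ^ c ≤ (b - a) ^ c`. -/
lemma aux_rpow_sub_rpow_le {a b c : ℝ} (ha : 0 ≤ a) (hab : a ≤ b) (hc : 0 ≤ c) (hc1 : c ≤ 1) :
    b ^ c - a ^ c ≤ (b - a) ^ c := by
  have hba : (0:ℝ) ≤ b - a := by linarith
  have h := NNReal.rpow_add_le_add_rpow (b - a).toNNReal a.toNNReal hc hc1
  have h' := NNReal.coe_le_coe.2 h
  rw [NNReal.coe_add, NNReal.coe_rpow, NNReal.coe_rpow, NNReal.coe_rpow, NNReal.coe_add,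
    Real.coe_toNNReal _ hba, Real.coe_toNNReal _ ha] at h'
  have hsum : b - a + a = b := by ring
  rw [hsum] at h'
  linarith

/-- Pointwise bound: `|f a - f b| ≤ p * M * |a - b| ^ (1/p)`. -/
lemma aux_pointwise_bound {p : ℝ} (hp : 1 ≤ p) {f f' : ℝ → ℝ}
    (hf : ∀ t ∈ Set.Ioi (0 : ℝ), HasDerivAt f (f' t) t)
    {M : ℝ} (hM : 0 ≤ M)
    (hbound : ∀ t : ℝ, 0 < t → t ^ (1 - 1 / p) * |f' t| ≤ M)
    {a b : ℝ} (ha : 0 < a) (hb : 0 < b) :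
    |f a - f b| ≤ p * M * |a - b| ^ (1 / p) := by
  have hp0 : (0:ℝ) < p := lt_of_lt_of_le one_pos hp
  set g : ℝ → ℝ := fun s => f (s ^ p) with hgdef
  set g' : ℝ → ℝ := fun s => f' (s ^ p) * (p * s ^ (p - 1)) with hg'def
  have hgd : ∀ s ∈ Set.Ioi (0:ℝ), HasDerivWithinAt g (g' s) (Set.Ioi 0) s := by
    intro s hs
    have hs0 : (0:ℝ) < s := hs
    have h1 : HasDerivAt (fun x : ℝ => x ^ p) (p * s ^ (p - 1)) s :=
      Real.hasDerivAt_rpow_const (Or.inl hs0.ne')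
    exact ((hf (s ^ p) (Real.rpow_pos_of_pos hs0 p)).comp s h1).hasDerivWithinAt
  have hbd : ∀ s ∈ Set.Ioi (0:ℝ), ‖g' s‖ ≤ p * M := by
    intro s hs
    have hs0 : (0:ℝ) < s := hs
    have ht : (0:ℝ) < s ^ p := Real.rpow_pos_of_pos hs0 p
    have hsp : (s ^ p) ^ (1 - 1 / p) = s ^ (p - 1) := by
      rw [← Real.rpow_mul hs0.le]
      congr 1
      field_simp
    have hnn : (0:ℝ) < p * s ^ (p - 1) := by positivity
    have hb := hbound (s ^ p) ht
    have : ‖g' s‖ = p * ((s ^ p) ^ (1 - 1 / p) * |f' (s ^ p)|) := by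
      rw [hg'def, Real.norm_eq_abs, abs_mul, abs_of_pos hnn, hsp]
      ring
    rw [this]
    exact mul_le_mul_of_nonneg_left hb hp0.le
  have hax : (0:ℝ) < a ^ (1 / p) := Real.rpow_pos_of_pos ha _
  have hbx : (0:ℝ) < b ^ (1 / p) := Real.rpow_pos_of_pos hb _
  have key := (convex_Ioi (0:ℝ)).norm_image_sub_le_of_norm_hasDerivWithin_le hgd hbd
    (Set.mem_Ioi.2 hbx) (Set.mem_Ioi.2 hax)
  have hpa : (a ^ (1 / p)) ^ p = a := by
    rw [← Real.rpow_mul ha.le, one_div_mul_cancel hp0.ne', Real.rpow_one]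
  have hpb : (b ^ (1 / p)) ^ p = b := by
    rw [← Real.rpow_mul hb.le, one_div_mul_cancel hp0.ne', Real.rpow_one]
  have key' : |f a - f b| ≤ p * M * |a ^ (1 / p) - b ^ (1 / p)| := by
    have : g (a ^ (1 / p)) = f a := by rw [hgdef]; simp only; rw [hpa]
    have hgb : g (b ^ (1 / p)) = f b := by rw [hgdef]; simp only; rw [hpb]
    rw [Real.norm_eq_abs, Real.norm_eq_abs, this, hgb] at key
    exact key
  refine key'.trans (mul_le_mul_of_nonneg_left ?_ (by positivity))
  -- |a^(1/p) - b^(1/p)| ≤ |a - b|^(1/p)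
  have hc0 : (0:ℝ) ≤ 1 / p := by positivity
  have hc1 : 1 / p ≤ 1 := by
    rw [div_le_one hp0]; exact hp
  rcases le_total a b with hab | hab
  · have hmono : a ^ (1 / p) ≤ b ^ (1 / p) := Real.rpow_le_rpow ha.le hab hc0
    rw [abs_sub_comm, abs_of_nonneg (by linarith), abs_sub_comm, abs_of_nonneg (by linarith)]
    exact aux_rpow_sub_rpow_le ha.le hab hc0 hc1
  · have hmono : b ^ (1 / p) ≤ a ^ (1 / p) := Real.rpow_le_rpow hb.le hab hc0
    rw [abs_of_nonneg (by linarith), abs_of_nonneg (by linarith)]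
    exact aux_rpow_sub_rpow_le hb.le hab hc0 hc1

/-- If `(X, μ)` is a finite measure space, `p ≥ 1`, `f` is differentiable
on `(0, ∞)` with `t^(1 - 1/p) · |f' t| ≤ M`, and `n₁, n₂` are integrable with values a.e.
in `(0, ∞)`, then `‖f ∘ n₁ - f ∘ n₂‖_{L¹(μ)} ≤ p · μ(X)^(1 - 1/p) · M · ‖n₁ - n₂‖_{L¹(μ)}^(1/p)`. -/
theorem xc_potential_L1_difference_bound
    {X : Type*} [MeasurableSpace X] (μ : Measure X) [IsFiniteMeasure μ]
    (p : ℝ) (hp : 1 ≤ p) (f f' : ℝ → ℝ)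
    (hf : ∀ t ∈ Set.Ioi (0 : ℝ), HasDerivAt f (f' t) t)
    (M : ℝ) (hM : 0 ≤ M)
    (hbound : ∀ t : ℝ, 0 < t → t ^ (1 - 1 / p) * |f' t| ≤ M)
    (n₁ n₂ : X → ℝ) (h₁ : Integrable n₁ μ) (h₂ : Integrable n₂ μ)
    (h₁pos : ∀ᵐ x ∂μ, 0 < n₁ x) (h₂pos : ∀ᵐ x ∂μ, 0 < n₂ x) :
    eLpNorm (fun x => f (n₁ x) - f (n₂ x)) 1 μ ≤
      ENNReal.ofReal (p * (μ Set.univ).toReal ^ (1 - 1 / p) * M *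
        (∫ x, |n₁ x - n₂ x| ∂μ) ^ (1 / p)) := by
  have hp0 : (0:ℝ) < p := lt_of_lt_of_le one_pos hp
  have hc0 : (0:ℝ) ≤ 1 / p := by positivity
  set d : X → ℝ := fun x => n₁ x - n₂ x with hd_def
  have hd : Integrable d μ := h₁.sub h₂
  have hdm : AEMeasurable (fun x => ENNReal.ofReal |d x|) μ :=
    hd.abs.aemeasurable.ennreal_ofReal
  set I : ℝ := ∫ x, |n₁ x - n₂ x| ∂μ with hI_def
  have hI0 : 0 ≤ I := integral_nonneg fun x => abs_nonneg _
  -- the lintegral of ofReal |d| equals ofReal I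
  have hIeq : ∫⁻ x, ENNReal.ofReal |d x| ∂μ = ENNReal.ofReal I := by
    rw [hI_def, ofReal_integral_eq_lintegral_ofReal hd.abs
      (Filter.Eventually.of_forall fun x => abs_nonneg _)]
  -- pointwise bound a.e.
  have hptwise : ∀ᵐ x ∂μ,
      (‖f (n₁ x) - f (n₂ x)‖₊ : ENNReal) ≤ ENNReal.ofReal (p * M * |d x| ^ (1 / p)) := by
    filter_upwards [h₁pos, h₂pos] with x hx1 hx2
    have h := aux_pointwise_bound hp hf hM hbound hx1 hx2
    rw [← enorm_eq_nnnorm, Real.enorm_eq_ofReal_abs]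
    exact ENNReal.ofReal_le_ofReal h
  -- Hölder-type bound for the lintegral of |d|^(1/p)
  have hHolder : ∫⁻ x, (ENNReal.ofReal |d x|) ^ (1 / p) ∂μ ≤
      (ENNReal.ofReal I) ^ (1 / p) * μ Set.univ ^ (1 - 1 / p) := by
    rcases eq_or_lt_of_le hp with hp1 | hp1
    · simp only [← hp1]
      simp [hIeq.symm]
    · have hpq : Real.HolderConjugate p (p / (p - 1)) := (Real.holderConjugate_iff_eq_conjExponent hp1).2 rfl
      have hmeas : AEMeasurable (fun x => (ENNReal.ofReal |d x|) ^ (1 / p)) μ :=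
        hdm.pow_const _
      have h := ENNReal.lintegral_mul_le_Lp_mul_Lq μ hpq hmeas aemeasurable_const
        (g := fun _ => (1 : ENNReal))
      simp only [Pi.mul_apply, mul_one, ENNReal.one_rpow, lintegral_const, one_mul] at h
      have heq1 : ∀ x, ((ENNReal.ofReal |d x|) ^ (1 / p)) ^ p = ENNReal.ofReal |d x| := by
        intro x
        rw [← ENNReal.rpow_mul, one_div_mul_cancel hp0.ne', ENNReal.rpow_one]
      simp only [heq1] at h
      have hq : 1 / (p / (p - 1)) = 1 - 1 / p := by
        field_simp
      rw [hIeq, hq] at h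
      exact h
  calc eLpNorm (fun x => f (n₁ x) - f (n₂ x)) 1 μ
      = ∫⁻ x, (‖f (n₁ x) - f (n₂ x)‖₊ : ENNReal) ∂μ := eLpNorm_one_eq_lintegral_enorm
    _ ≤ ∫⁻ x, ENNReal.ofReal (p * M * |d x| ^ (1 / p)) ∂μ := lintegral_mono_ae hptwise
    _ = ENNReal.ofReal (p * M) * ∫⁻ x, (ENNReal.ofReal |d x|) ^ (1 / p) ∂μ := by
        rw [← lintegral_const_mul' _ _ ENNReal.ofReal_ne_top]
        congr 1
        funext x
        rw [ENNReal.ofReal_mul (by positivity), ENNReal.ofReal_rpow_of_nonneg (abs_nonneg _) hc0]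
    _ ≤ ENNReal.ofReal (p * M) * ((ENNReal.ofReal I) ^ (1 / p) * μ Set.univ ^ (1 - 1 / p)) :=
        mul_le_mul_right hHolder _
    _ = ENNReal.ofReal (p * (μ Set.univ).toReal ^ (1 - 1 / p) * M * I ^ (1 / p)) := by
        have hc1 : 1 / p ≤ 1 := by rw [div_le_one hp0]; exact hp
        have hμ : μ Set.univ ^ (1 - 1 / p) =
            ENNReal.ofReal ((μ Set.univ).toReal ^ (1 - 1 / p)) := by
          rw [ENNReal.toReal_rpow, ENNReal.ofReal_toReal]
          exact ENNReal.rpow_ne_top_of_nonneg (by linarith) (measure_ne_top μ _)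
        rw [ENNReal.ofReal_rpow_of_nonneg hI0 hc0, hμ, ← ENNReal.ofReal_mul (by positivity),
          ← ENNReal.ofReal_mul (by positivity)]
        congr 1
        ring
end

section
/- Let δ₁, δ₂, δ₃ be linearly independent vectors in ℝ³, let cell = {α₁δ₁ + α₂δ₂ + α₃δ₃ : 0 ≤ αᵢ ≤ 1}, and let ρ be the diameter of cell. Let r > 2, C ≥ 0, R₀ > 0, and let v : ℝ³ → ℝ be a measurable function such that |v(x − y) − v(x)| ≤ C ‖y‖ ‖x‖^{−(r+1)} whenever ‖x‖ ≥ R₀ and ‖y‖ ≤ ρ. Let Λ = {m ∈ ℤ³ : ‖m₁δ₁ + m₂δ₂ + m₃δ₃‖ ≥ R₀ + 2ρ}, and write R_m = m₁δ₁ + m₂δ₂ + m₃δ₃. Then there exists a constant L, depending only on C, r, ρ, R₀ and the lattice (and not on v, g, or x), such that for every integrable g : ℝ³ → ℝ supported in cell with ∫_cell g = 0 and every x ∈ cell: the family (∫_cell v(x − y − R_m) g(y) dy)_{m ∈ Λ} is summable, and |∑_{m ∈ Λ} ∫_cell v(x − y − R_m) g(y) dy| ≤ L · ‖g‖_{L¹(cell)}.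 -/
open MeasureTheory

lemma int_vec_norm_ge_one {n : ℕ} {p : Fin n → ℤ} (hp : p ≠ 0) : 1 ≤ ‖p‖ := by
  obtain ⟨i, hi⟩ : ∃ i, p i ≠ 0 := by
    by_contra h; push_neg at h; exact hp (funext h)
  calc (1:ℝ) ≤ ‖p i‖ := by
        rw [Int.norm_eq_abs]; exact_mod_cast Int.one_le_abs hi
    _ ≤ ‖p‖ := norm_le_pi_norm p i

lemma summable_max_rpow_fin2 {k : ℝ} (hk : 2 < k) :
    Summable fun p : Fin 2 → ℤ => (max ‖p‖ 1) ^ (-k) := by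
  have h1 : Summable fun p : Fin 2 → ℤ =>
      ‖p‖ ^ (-k) + Set.indicator {(0 : Fin 2 → ℤ)} 1 p :=
    (EisensteinSeries.summable_one_div_norm_rpow hk).add
      (summable_of_finite_support (by
        apply Set.Finite.subset (Set.finite_singleton (0 : Fin 2 → ℤ))
        intro p hp
        simp only [Function.mem_support] at hp
        by_contra h
        exact hp (Set.indicator_of_notMem h _)))
  refine h1.of_nonneg_of_le (fun p => by positivity) (fun p => ?_)
  by_cases hp : p = 0
  · subst hp
    rw [norm_zero, max_eq_right zero_le_one, Real.one_rpow,
      Real.zero_rpow (by intro h; rw [neg_eq_zero] at h; linarith)]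
    simp
  · rw [max_eq_left (int_vec_norm_ge_one hp), Set.indicator_of_notMem (by simpa using hp)]
    simp

lemma summable_max_rpow_int {t : ℝ} (ht : 1 < t) :
    Summable fun c : ℤ => (max |(c:ℝ)| 1) ^ (-t) := by
  have h1 : Summable fun c : ℤ =>
      |(c:ℝ)| ^ (-t) + Set.indicator {(0 : ℤ)} 1 c :=
    (Real.summable_abs_int_rpow ht).add
      (summable_of_finite_support (by
        apply Set.Finite.subset (Set.finite_singleton (0 : ℤ))
        intro p hp
        simp only [Function.mem_support] at hp
        by_contra h
        exact hp (Set.indicator_of_notMem h _)))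
  refine h1.of_nonneg_of_le (fun p => by positivity) (fun c => ?_)
  by_cases hc : c = 0
  · subst hc
    rw [Int.cast_zero, abs_zero, max_eq_right zero_le_one, Real.one_rpow,
      Real.zero_rpow (by intro h; rw [neg_eq_zero] at h; linarith)]
    simp
  · have : (1:ℝ) ≤ |(c:ℝ)| := by exact_mod_cast Int.one_le_abs hc
    rw [max_eq_left this, Set.indicator_of_notMem (by simpa using hc)]
    simp

lemma summable_norm_rpow_fin3 {s : ℝ} (hs : 3 < s) :
    Summable fun m : Fin 3 → ℤ => ‖m‖ ^ (-s) := by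
  set k : ℝ := (s + 1) / 2 with hk
  set t : ℝ := (s - 1) / 2 with ht
  have hk2 : 2 < k := by rw [hk]; linarith
  have ht1 : 1 < t := by rw [ht]; linarith
  let e : (Fin 3 → ℤ) ≃ ℤ × (Fin 2 → ℤ) := (Fin.insertNthEquiv (fun _ => ℤ) 0).symm
  have hprod : Summable fun q : ℤ × (Fin 2 → ℤ) =>
      (max |(q.1:ℝ)| 1) ^ (-t) * (max ‖q.2‖ 1) ^ (-k) :=
    (summable_max_rpow_int ht1).mul_of_nonneg (summable_max_rpow_fin2 hk2)
      (fun c => by positivity) (fun p => by positivity)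
  have := hprod.comp_injective e.injective
  refine this.of_nonneg_of_le (fun m => by positivity) (fun m => ?_)
  show ‖m‖ ^ (-s) ≤ (max |((e m).1 : ℝ)| 1) ^ (-t) * (max ‖(e m).2‖ 1) ^ (-k)
  by_cases hm : m = 0
  · subst hm
    rw [norm_zero, Real.zero_rpow (by intro h; rw [neg_eq_zero] at h; linarith)]
    positivity
  · have h1 : (1:ℝ) ≤ ‖m‖ := int_vec_norm_ge_one hm
    have hm0 : 0 < ‖m‖ := by linarith
    have he1 : |((e m).1 : ℝ)| ≤ ‖m‖ := by
      have : (e m).1 = m 0 := rfl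
      rw [this, ← Int.norm_eq_abs]
      exact_mod_cast norm_le_pi_norm m 0
    have he2 : ‖(e m).2‖ ≤ ‖m‖ := by
      refine (pi_norm_le_iff_of_nonneg (norm_nonneg m)).2 (fun i => ?_)
      exact norm_le_pi_norm m _
    have hmax1 : max |((e m).1 : ℝ)| 1 ≤ ‖m‖ := max_le he1 h1
    have hmax2 : max ‖(e m).2‖ 1 ≤ ‖m‖ := max_le he2 h1
    calc ‖m‖ ^ (-s) = ‖m‖ ^ (-t) * ‖m‖ ^ (-k) := by
          rw [← Real.rpow_add hm0]; congr 1; rw [hk, ht]; ring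
      _ ≤ (max |((e m).1 : ℝ)| 1) ^ (-t) * (max ‖(e m).2‖ 1) ^ (-k) := by
          apply mul_le_mul
          · exact Real.rpow_le_rpow_of_nonpos (by positivity) hmax1 (by linarith)
          · exact Real.rpow_le_rpow_of_nonpos (by positivity) hmax2 (by linarith)
          · positivity
          · positivity

/-- Uniform bound on the long-range part of the Hartree potential.  If the
interaction `v` satisfies the difference estimate
`|v (x - y) - v x| ≤ C ‖y‖ ‖x‖^(-(r+1))` for `‖x‖ ≥ R₀`, `‖y‖ ≤ ρ` (`ρ` = diameter of
the unit cell), then there is a constant `L` such that for every integrable `g`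
supported in the unit cell with `∫_cell g = 0` and every `x` in the cell, the lattice
sum `∑_{m ∈ Λ} ∫_cell v (x - y - R_m) g y dy` over the far sites
`Λ = {m : ‖R_m‖ ≥ R₀ + 2ρ}` converges and is bounded by `L ‖g‖_{L¹(cell)}`. -/
theorem hartree_long_range_bound
    (δ : Fin 3 → EuclideanSpace ℝ (Fin 3)) (hδ : LinearIndependent ℝ δ)
    (cell : Set (EuclideanSpace ℝ (Fin 3)))
    (hcell : cell = {x | ∃ α : Fin 3 → ℝ, (∀ i, α i ∈ Set.Icc (0 : ℝ) 1) ∧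
      x = ∑ i, α i • δ i})
    (ρ : ℝ) (hρ : ρ = Metric.diam cell)
    (r : ℝ) (hr : 2 < r) (C : ℝ) (hC : 0 ≤ C) (R₀ : ℝ) (hR₀ : 0 < R₀)
    (v : EuclideanSpace ℝ (Fin 3) → ℝ) (hv_meas : Measurable v)
    (hv : ∀ x y : EuclideanSpace ℝ (Fin 3), R₀ ≤ ‖x‖ → ‖y‖ ≤ ρ →
      |v (x - y) - v x| ≤ C * ‖y‖ * ‖x‖ ^ (-(r + 1))) :
    ∃ L : ℝ, ∀ g : EuclideanSpace ℝ (Fin 3) → ℝ, Integrable g volume →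
      (∀ x ∉ cell, g x = 0) → (∫ y in cell, g y) = 0 →
      ∀ x ∈ cell,
        Summable (fun m : {m : Fin 3 → ℤ // R₀ + 2 * ρ ≤ ‖∑ i, ((m i : ℝ)) • δ i‖} =>
          ∫ y in cell, v (x - y - ∑ i, ((m.1 i : ℝ)) • δ i) * g y) ∧
        |∑' m : {m : Fin 3 → ℤ // R₀ + 2 * ρ ≤ ‖∑ i, ((m i : ℝ)) • δ i‖},
            ∫ y in cell, v (x - y - ∑ i, ((m.1 i : ℝ)) • δ i) * g y| ≤
          L * ∫ y in cell, |g y| := by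
  -- basic facts about the cell
  have hcomp : IsCompact cell := by
    have : cell = (fun α : Fin 3 → ℝ => ∑ i, α i • δ i) ''
        (Set.univ.pi fun _ => Set.Icc (0:ℝ) 1) := by
      rw [hcell]; ext x
      simp only [Set.mem_image, Set.mem_pi, Set.mem_univ, forall_true_left, Set.mem_setOf_eq]
      constructor
      · rintro ⟨α, h1, h2⟩; exact ⟨α, h1, h2.symm⟩
      · rintro ⟨α, h1, h2⟩; exact ⟨α, h1, h2.symm⟩
    rw [this]
    exact (isCompact_univ_pi fun _ => isCompact_Icc).image
      (continuous_finset_sum _ fun i _ => (continuous_apply i).smul continuous_const)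
  have h0cell : (0 : EuclideanSpace ℝ (Fin 3)) ∈ cell := by
    rw [hcell]; exact ⟨0, fun i => ⟨le_refl 0, zero_le_one⟩, by simp⟩
  have hcellmeas : MeasurableSet cell := hcomp.isClosed.measurableSet
  have hρ0 : 0 ≤ ρ := hρ ▸ Metric.diam_nonneg
  have hcell_norm : ∀ z ∈ cell, ‖z‖ ≤ ρ := by
    intro z hz
    have := Metric.dist_le_diam_of_mem hcomp.isBounded hz h0cell
    rwa [dist_zero_right, ← hρ] at this
  -- norm comparison constant
  obtain ⟨c, hc0, hcle⟩ : ∃ c : ℝ, 0 < c ∧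
      ∀ m : Fin 3 → ℤ, ‖m‖ ≤ c * ‖∑ i, ((m i : ℝ)) • δ i‖ := by
    have hcard : Fintype.card (Fin 3) = Module.finrank ℝ (EuclideanSpace ℝ (Fin 3)) := by
      simp [finrank_euclideanSpace]
    let b : Module.Basis (Fin 3) ℝ (EuclideanSpace ℝ (Fin 3)) :=
      basisOfLinearIndependentOfCardEqFinrank hδ hcard
    have hb : ⇑b = δ := coe_basisOfLinearIndependentOfCardEqFinrank hδ hcard
    let A : EuclideanSpace ℝ (Fin 3) →L[ℝ] (Fin 3 → ℝ) :=
      LinearMap.toContinuousLinearMap b.equivFun.toLinearMap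
    refine ⟨‖A‖ + 1, by positivity, fun m => ?_⟩
    have hA : A (∑ i, ((m i : ℝ)) • δ i) = fun i => (m i : ℝ) := by
      have : (∑ i, ((m i : ℝ)) • δ i) = b.equivFun.symm (fun i => (m i : ℝ)) := by
        rw [Module.Basis.equivFun_symm_apply]
        simp [hb]
      show b.equivFun _ = _
      rw [this, LinearEquiv.apply_symm_apply]
    have hnm : ‖m‖ = ‖fun i => (m i : ℝ)‖ := by
      apply le_antisymm
      · refine (pi_norm_le_iff_of_nonneg (norm_nonneg _)).2 (fun i => ?_)
        calc ‖m i‖ = ‖((m i : ℝ))‖ := (Int.norm_cast_real (m i)).symm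
          _ ≤ _ := norm_le_pi_norm (fun j => ((m j : ℝ))) i
      · refine (pi_norm_le_iff_of_nonneg (norm_nonneg _)).2 (fun i => ?_)
        calc ‖((m i : ℝ))‖ = ‖m i‖ := Int.norm_cast_real (m i)
          _ ≤ _ := norm_le_pi_norm m i
    calc ‖m‖ = ‖A (∑ i, ((m i : ℝ)) • δ i)‖ := by rw [hA, hnm]
      _ ≤ ‖A‖ * ‖∑ i, ((m i : ℝ)) • δ i‖ := A.le_opNorm _
      _ ≤ (‖A‖ + 1) * ‖∑ i, ((m i : ℝ)) • δ i‖ := by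
          apply mul_le_mul_of_nonneg_right (by linarith) (norm_nonneg _)
  -- notation for lattice points
  set Λ := {m : Fin 3 → ℤ // R₀ + 2 * ρ ≤ ‖∑ i, ((m i : ℝ)) • δ i‖} with hΛ
  set R : (Fin 3 → ℤ) → EuclideanSpace ℝ (Fin 3) := fun m => ∑ i, ((m i : ℝ)) • δ i with hR
  -- summability of the lattice sum of ‖R m‖^(-(r+1))
  have hRpos : ∀ m : Λ, 0 < ‖R m.1‖ := fun m => lt_of_lt_of_le (by linarith) m.2
  have hSsum : Summable fun m : Λ => ‖R m.1‖ ^ (-(r+1)) := by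
    have hbig : Summable fun m : Fin 3 → ℤ => ‖m‖ ^ (-(r+1)) * c ^ (r+1) :=
      (summable_norm_rpow_fin3 (by linarith)).mul_right _
    refine (hbig.subtype _).of_nonneg_of_le (fun m => by positivity) (fun m => ?_)
    have hm0 : m.1 ≠ 0 := by
      intro h
      have h2 : R₀ + 2 * ρ ≤ ‖R m.1‖ := m.2
      have hr0 : ‖R m.1‖ = 0 := by rw [hR]; simp [h]
      rw [hr0] at h2; linarith
    have h1 : (1:ℝ) ≤ ‖m.1‖ := int_vec_norm_ge_one hm0
    have hle : ‖m.1‖ / c ≤ ‖R m.1‖ := by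
      rw [div_le_iff₀' hc0]; exact hcle m.1
    have hpos : 0 < ‖m.1‖ / c := by positivity
    calc ‖R m.1‖ ^ (-(r+1)) ≤ (‖m.1‖ / c) ^ (-(r+1)) :=
          Real.rpow_le_rpow_of_nonpos hpos hle (by linarith)
      _ = ‖m.1‖ ^ (-(r+1)) * c ^ (r+1) := by
          rw [div_eq_mul_inv, Real.mul_rpow (norm_nonneg _) (by positivity),
            Real.inv_rpow hc0.le, Real.rpow_neg hc0.le, inv_inv]
  set S : ℝ := ∑' m : Λ, ‖R m.1‖ ^ (-(r+1)) with hS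
  have hS0 : 0 ≤ S := tsum_nonneg (fun m => by positivity)
  refine ⟨C * ρ * 2 ^ (r+1) * S, fun g hg_int hg_supp hg_zero x hx => ?_⟩
  set I : ℝ := ∫ y in cell, |g y| with hI
  have hI0 : 0 ≤ I := integral_nonneg (fun y => abs_nonneg _)
  -- per-site bound
  have key : ∀ m : Λ,
      |∫ y in cell, v (x - y - R m.1) * g y| ≤
        C * ρ * 2 ^ (r+1) * ‖R m.1‖ ^ (-(r+1)) * I := by
    intro m
    set Rm := R m.1 with hRm
    have hRmΛ : R₀ + 2 * ρ ≤ ‖Rm‖ := m.2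
    have hRmpos : 0 < ‖Rm‖ := hRpos m
    have hxρ : ‖x‖ ≤ ρ := hcell_norm x hx
    have hxRm : R₀ ≤ ‖x - Rm‖ := by
      have : ‖Rm‖ - ‖x‖ ≤ ‖x - Rm‖ := by
        rw [norm_sub_rev]; exact norm_sub_norm_le _ _
      linarith
    have hhalf : ‖Rm‖ / 2 ≤ ‖x - Rm‖ := by
      have h2ρ : 2 * ρ ≤ ‖Rm‖ := by linarith
      have : ‖Rm‖ - ‖x‖ ≤ ‖x - Rm‖ := by
        rw [norm_sub_rev]; exact norm_sub_norm_le _ _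
      linarith
    have hpow : ‖x - Rm‖ ^ (-(r+1)) ≤ 2 ^ (r+1) * ‖Rm‖ ^ (-(r+1)) := by
      calc ‖x - Rm‖ ^ (-(r+1)) ≤ (‖Rm‖ / 2) ^ (-(r+1)) :=
            Real.rpow_le_rpow_of_nonpos (by positivity) hhalf (by linarith)
        _ = 2 ^ (r+1) * ‖Rm‖ ^ (-(r+1)) := by
            rw [div_eq_mul_inv, Real.mul_rpow hRmpos.le (by positivity),
              Real.inv_rpow (by norm_num : (0:ℝ) ≤ 2), Real.rpow_neg (by norm_num : (0:ℝ) ≤ 2),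
              inv_inv, mul_comm]
    set K : ℝ := C * ρ * (2 ^ (r+1) * ‖Rm‖ ^ (-(r+1))) with hK
    have hK0 : 0 ≤ K := by positivity
    set D : EuclideanSpace ℝ (Fin 3) → ℝ := fun y => v (x - y - Rm) - v (x - Rm) with hD
    have hDbound : ∀ y ∈ cell, |D y| ≤ K := by
      intro y hy
      have hyρ : ‖y‖ ≤ ρ := hcell_norm y hy
      have := hv (x - Rm) y hxRm hyρ
      have heq : x - Rm - y = x - y - Rm := by abel
      rw [heq] at this
      calc |D y| ≤ C * ‖y‖ * ‖x - Rm‖ ^ (-(r+1)) := this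
        _ ≤ C * ρ * (2 ^ (r+1) * ‖Rm‖ ^ (-(r+1))) := by
            have h1 : C * ‖y‖ ≤ C * ρ := by
              apply mul_le_mul_of_nonneg_left hyρ hC
            calc C * ‖y‖ * ‖x - Rm‖ ^ (-(r+1)) ≤ C * ρ * ‖x - Rm‖ ^ (-(r+1)) := by
                  apply mul_le_mul_of_nonneg_right h1 (by positivity)
              _ ≤ C * ρ * (2 ^ (r+1) * ‖Rm‖ ^ (-(r+1))) := by
                  apply mul_le_mul_of_nonneg_left hpow (by positivity)
    have hDmeas : Measurable D := by
      apply Measurable.sub _ measurable_const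
      exact hv_meas.comp (((measurable_const.sub measurable_id).sub_const Rm))
    have hg_cell : IntegrableOn g cell := hg_int.integrableOn
    have hDg_int : IntegrableOn (fun y => D y * g y) cell := by
      apply Integrable.mono' (hg_cell.abs.const_mul K)
        ((hDmeas.aestronglyMeasurable).mul hg_cell.aestronglyMeasurable)
      refine (ae_restrict_iff' hcellmeas).2 (Filter.Eventually.of_forall (fun y hy => ?_))
      simp only [Pi.mul_apply, Real.norm_eq_abs, abs_mul]
      exact mul_le_mul_of_nonneg_right (hDbound y hy) (abs_nonneg _)
    have hsplit : (∫ y in cell, v (x - y - Rm) * g y) = ∫ y in cell, D y * g y := by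
      have heq : ∀ y, v (x - y - Rm) * g y = D y * g y + v (x - Rm) * g y := by
        intro y; rw [hD]; ring
      rw [show (fun y => v (x - y - Rm) * g y) = fun y => D y * g y + v (x - Rm) * g y from
          funext heq]
      rw [integral_add hDg_int (hg_cell.const_mul _), integral_const_mul, hg_zero, mul_zero,
        add_zero]
    rw [hsplit]
    calc |∫ y in cell, D y * g y| ≤ ∫ y in cell, |D y| * |g y| := by
          simpa [Real.norm_eq_abs] using
            norm_integral_le_integral_norm (fun y => D y * g y) (μ := volume.restrict cell)
      _ ≤ ∫ y in cell, K * |g y| := by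
          have habs : IntegrableOn (fun y => |D y| * |g y|) cell :=
            hDg_int.abs.congr (Filter.Eventually.of_forall fun y => abs_mul _ _)
          apply setIntegral_mono_on habs (hg_cell.abs.const_mul K) hcellmeas
          intro y hy
          exact mul_le_mul_of_nonneg_right (hDbound y hy) (abs_nonneg _)
      _ = K * I := by rw [integral_const_mul]
      _ = C * ρ * 2 ^ (r+1) * ‖Rm‖ ^ (-(r+1)) * I := by rw [hK]; ring
  -- majorant summability
  have hmaj : Summable fun m : Λ => C * ρ * 2 ^ (r+1) * ‖R m.1‖ ^ (-(r+1)) * I := by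
    have := (hSsum.mul_left (C * ρ * 2 ^ (r+1))).mul_right I
    exact this.congr (fun m => by ring)
  have hsum : Summable fun m : Λ => ∫ y in cell, v (x - y - R m.1) * g y := by
    apply Summable.of_norm_bounded hmaj
    intro m
    rw [Real.norm_eq_abs]
    exact key m
  refine ⟨hsum, ?_⟩
  calc |∑' m : Λ, ∫ y in cell, v (x - y - R m.1) * g y|
      ≤ ∑' m : Λ, |∫ y in cell, v (x - y - R m.1) * g y| := by
        have := norm_tsum_le_tsum_norm (f := fun m : Λ => ∫ y in cell, v (x - y - R m.1) * g y)
          (by simpa [Real.norm_eq_abs] using hsum.abs)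
        simpa [Real.norm_eq_abs] using this
    _ ≤ ∑' m : Λ, C * ρ * 2 ^ (r+1) * ‖R m.1‖ ^ (-(r+1)) * I := by
        exact Summable.tsum_le_tsum key (by simpa [Real.norm_eq_abs] using hsum.abs) hmaj
    _ = C * ρ * 2 ^ (r+1) * S * I := by
        rw [hS, ← tsum_mul_left, ← tsum_mul_right]
end
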